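/- Let G be a group, p a prime, and n ≥ 1 an integer. Fix a set R of representatives of the orbits of the simultaneous conjugation action of G on G_{n,p}. Then the map from the disjoint union, over (g_1, …, g_n) ∈ R, of the sets of conjugacy classes of finite-order elements of the centralizer C⟨g_1,…,g_n⟩ to G \ G_{n,p,+1}, which sends the conjugacy class of a finite-order element x of C⟨g_1,…,g_n⟩ to the G-conjugacy class of the tuple (x, g_1, …, g_n), is well defined and bijective. -/

import Mathlib

/-- `pTuples G p n` is the set `G_{n,p}` of `n`-tuples of pairwise commuting elements
of `G`, each of order a power of `p`. -/
def pTuples (G : Type*) [Group G] (p n : ℕ) : Set (Fin n → G) :=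
  {v | (∀ i j, Commute (v i) (v j)) ∧ ∀ i, ∃ k : ℕ, orderOf (v i) = p ^ k}

/-- Simultaneous conjugation relation on a set of tuples. -/
def tupleConj {G : Type*} [Group G] {n : ℕ} (s : Set (Fin n → G)) (a b : s) : Prop :=
  ∃ g : G, ∀ i, g * a.1 i * g⁻¹ = b.1 i

/-- The centralizer in `G` of the subgroup generated by the entries of a tuple. -/
def tupleCentralizer {G : Type*} [Group G] {n : ℕ} (v : Fin n → G) : Subgroup G :=
  Subgroup.centralizer (Subgroup.closure (Set.range v) : Set G)

/-- `pTuplesPlus G p n` is the set `G_{n,p,+1}` of `(n+1)`-tuples `(x, g₁, …, gₙ)` of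
pairwise commuting elements of `G` with `x` of finite order and each `gᵢ` of `p`-power
order. -/
def pTuplesPlus (G : Type*) [Group G] (p n : ℕ) : Set (Fin (n + 1) → G) :=
  {v | (∀ i j, Commute (v i) (v j)) ∧ IsOfFinOrder (v 0) ∧
    ∀ i : Fin n, ∃ k : ℕ, orderOf (v i.succ) = p ^ k}

/-- The set of finite-order elements of a group. -/
def torsionSet (H : Type*) [Group H] : Set H := {x | IsOfFinOrder x}

/-- Conjugation relation on a set of elements of a group. -/
def elemConj {H : Type*} [Group H] (s : Set H) (a b : s) : Prop :=
  ∃ h : H, h * a.1 * h⁻¹ = b.1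

lemma mem_tupleCentralizer_iff {G : Type*} [Group G] {n : ℕ} {v : Fin n → G} {g : G} :
    g ∈ tupleCentralizer v ↔ ∀ i, Commute g (v i) := by
  constructor
  · intro hg i
    have : v i ∈ Subgroup.closure (Set.range v) :=
      Subgroup.subset_closure (Set.mem_range_self i)
    exact (Subgroup.mem_centralizer_iff.1 hg _ this).symm
  · intro h
    rw [tupleCentralizer, Subgroup.mem_centralizer_iff]
    intro x hx
    refine Subgroup.closure_induction (fun y hy => ?_) (by simp) (fun a b _ _ ha hb => ?_)
      (fun a _ ha => ?_) hx
    · obtain ⟨i, rfl⟩ := hy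
      exact (h i).symm
    · rw [mul_assoc, hb, ← mul_assoc, ha, mul_assoc]
    · exact Commute.inv_left ha

lemma subgroup_isOfFinOrder_coe {G : Type*} [Group G] {H : Subgroup G} {x : H} :
    IsOfFinOrder (x : G) ↔ IsOfFinOrder x := by
  rw [isOfFinOrder_iff_pow_eq_one, isOfFinOrder_iff_pow_eq_one]
  refine exists_congr fun k => and_congr_right fun _ => ?_
  rw [← SubgroupClass.coe_pow, Subtype.ext_iff, OneMemClass.coe_one]

lemma tupleConj_equivalence {G : Type*} [Group G] {n : ℕ} (s : Set (Fin n → G)) :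
    Equivalence (tupleConj s) := by
  constructor
  · intro a; exact ⟨1, fun i => by group⟩
  · rintro a b ⟨g, hg⟩
    exact ⟨g⁻¹, fun i => by rw [← hg i]; group⟩
  · rintro a b c ⟨g, hg⟩ ⟨h, hh⟩
    exact ⟨h * g, fun i => by rw [← hh i, ← hg i]; group⟩

/-- Given a set `R` of representatives for the orbits of `G` on `G_{n,p}`, the map sending
the conjugacy class of a finite-order element `x` of the centralizer `C⟨g₁,…,gₙ⟩`
(for `(g₁,…,gₙ) ∈ R`) to the `G`-conjugacy class of `(x, g₁, …, gₙ)` is well defined and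
bijective onto `G \ G_{n,p,+1}`. -/
theorem orbit_decomposition_of_plus_tuples {G : Type*} [Group G] (p n : ℕ) (hp : p.Prime)
    (hn : 1 ≤ n) (R : Set (Fin n → G)) (hR₁ : R ⊆ pTuples G p n)
    (hR₂ : ∀ v ∈ pTuples G p n, ∃! r, r ∈ R ∧ ∃ g : G, ∀ i, g * r i * g⁻¹ = v i) :
    (∀ (r : Fin n → G), r ∈ R → ∀ x : tupleCentralizer r, IsOfFinOrder x →
        Fin.cons (x : G) r ∈ pTuplesPlus G p n) ∧
    ∃ f : ((r : R) × Quot (elemConj (torsionSet (tupleCentralizer r.1)))) →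
        Quot (tupleConj (pTuplesPlus G p n)),
      Function.Bijective f ∧
      ∀ (r : R) (x : torsionSet (tupleCentralizer r.1))
        (h : Fin.cons ((x : tupleCentralizer r.1) : G) r.1 ∈ pTuplesPlus G p n),
        f ⟨r, Quot.mk _ x⟩ = Quot.mk _ ⟨Fin.cons ((x : tupleCentralizer r.1) : G) r.1, h⟩ := by
  have part1 : ∀ (r : Fin n → G), r ∈ R → ∀ x : tupleCentralizer r, IsOfFinOrder x →
      Fin.cons (x : G) r ∈ pTuplesPlus G p n := by
    intro r hr x hx
    obtain ⟨hcomm, hord⟩ := hR₁ hr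
    have hxc : ∀ i, Commute (x : G) (r i) := mem_tupleCentralizer_iff.1 x.2
    refine ⟨?_, ?_, ?_⟩
    · intro i j
      induction i using Fin.cases with
      | zero =>
        induction j using Fin.cases with
        | zero => exact Commute.refl _
        | succ j => simpa using hxc j
      | succ i =>
        induction j using Fin.cases with
        | zero => simpa using (hxc i).symm
        | succ j => simpa using hcomm i j
    · simpa using subgroup_isOfFinOrder_coe.2 hx
    · intro i; simpa using hord i
  refine ⟨part1, ?_⟩
  -- define f
  have sound : ∀ (r : R) (x y : torsionSet (tupleCentralizer r.1)),
      elemConj _ x y →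
      (Quot.mk (tupleConj (pTuplesPlus G p n))
        ⟨Fin.cons ((x : tupleCentralizer r.1) : G) r.1, part1 r.1 r.2 x.1 x.2⟩ : _) =
      Quot.mk _ ⟨Fin.cons ((y : tupleCentralizer r.1) : G) r.1, part1 r.1 r.2 y.1 y.2⟩ := by
    rintro r x y ⟨h, hh⟩
    refine Quot.sound ⟨(h : G), fun i => ?_⟩
    induction i using Fin.cases with
    | zero =>
      simpa using congrArg (Subtype.val) hh
    | succ i =>
      have := (mem_tupleCentralizer_iff.1 h.2 i)
      simp only [Fin.cons_succ]
      rw [this.eq, mul_assoc, mul_inv_cancel, mul_one]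
  refine ⟨fun q => Quot.lift
    (fun x => Quot.mk _ ⟨Fin.cons (x.1.1 : G) q.1.1,
        part1 q.1.1 q.1.2 x.1 x.2⟩)
    (sound q.1) q.2, ⟨?_, ?_⟩, ?_⟩
  · -- injective
    rintro ⟨r, qx⟩ ⟨r', qy⟩ hfq
    induction qx using Quot.ind with | _ x =>
    induction qy using Quot.ind with | _ y =>
    have hconj := ((tupleConj_equivalence (pTuplesPlus G p n)).eqvGen_iff).1
      (Quot.eqvGen_exact hfq)
    obtain ⟨g, hg⟩ := hconj
    have hgr : ∀ i, g * r.1 i * g⁻¹ = r'.1 i := fun i => by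
      simpa using hg i.succ
    have hrr' : r.1 = r'.1 := by
      obtain ⟨u, hu, huniq⟩ := hR₂ r'.1 (hR₁ r'.2)
      have h1 : r.1 = u := huniq r.1 ⟨r.2, g, hgr⟩
      have h2 : r'.1 = u := huniq r'.1 ⟨r'.2, 1, fun i => by group⟩
      rw [h1, h2]
    obtain ⟨r, hr⟩ := r
    obtain ⟨r', hr'⟩ := r'
    simp only at hrr'
    subst hrr'
    have hgc : g ∈ tupleCentralizer r := mem_tupleCentralizer_iff.2 fun i => by
      have h2 : g * r i * g⁻¹ = r i := by simpa using hgr i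
      exact mul_inv_eq_iff_eq_mul.mp h2
    have : Quot.mk (elemConj (torsionSet (tupleCentralizer r))) x = Quot.mk _ y := by
      refine Quot.sound ⟨⟨g, hgc⟩, ?_⟩
      ext
      simpa using hg 0
    simp [this]
  · -- surjective
    rintro q
    induction q using Quot.ind with | _ v =>
    obtain ⟨hcomm, hfin, hord⟩ := v.2
    have hw : (fun i : Fin n => v.1 i.succ) ∈ pTuples G p n :=
      ⟨fun i j => hcomm i.succ j.succ, hord⟩
    obtain ⟨r, ⟨hrR, g, hg⟩, -⟩ := hR₂ _ hw
    set x : G := g⁻¹ * v.1 0 * g with hxdef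
    have hxc : x ∈ tupleCentralizer r := by
      refine mem_tupleCentralizer_iff.2 fun i => ?_
      have h1 : r i = g⁻¹ * v.1 i.succ * g := by rw [← hg i]; group
      have h2 : Commute (v.1 0) (v.1 i.succ) := hcomm 0 i.succ
      rw [hxdef, h1]
      simpa using h2.conj g⁻¹
    have hxf : IsOfFinOrder x := by
      have : x = (MulAut.conj g⁻¹) (v.1 0) := by rw [hxdef, MulAut.conj_apply, inv_inv]
      rw [this]
      exact (MulAut.conj g⁻¹).toMonoidHom.isOfFinOrder hfin
    have hxfin : IsOfFinOrder (⟨x, hxc⟩ : tupleCentralizer r) :=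
      subgroup_isOfFinOrder_coe.1 hxf
    refine ⟨⟨⟨r, hrR⟩, Quot.mk _ ⟨⟨x, hxc⟩, hxfin⟩⟩, ?_⟩
    refine Quot.sound ⟨g, fun i => ?_⟩
    induction i using Fin.cases with
    | zero => simp [hxdef]; group
    | succ i => simpa using hg i
  · intro r x h
    rfl
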